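/- Let J be an n×n unitary matrix over ℂ, let k < n, and let z_1,…,z_n be complex numbers of modulus 1. Suppose that for every i > k and every j (with 1 ≤ j ≤ n) one has Σ_r J_{ir}·conj(J_{jr})·z_r = δ_{ij}. Then z_r = 1 for every index r such that J_{ir} ≠ 0 for some i > k. -/

import Mathlib

open scoped ComplexConjugate

/-- If `J` is unitary, the `z_r` are unimodular, and
`Σ_r J_{ir} conj(J_{jr}) z_r = δ_{ij}` for all `i > k`, then `z_r = 1` whenever
some entry `J_{ir}` with `i > k` is nonzero. -/
theorem stmt_4 (n k : ℕ) (hk : k < n) (J : Matrix (Fin n) (Fin n) ℂ)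
    (hJ : J ∈ Matrix.unitaryGroup (Fin n) ℂ)
    (z : Fin n → ℂ) (hz : ∀ r, ‖z r‖ = 1)
    (h : ∀ i j : Fin n, k ≤ (i : ℕ) →
      ∑ r, J i r * conj (J j r) * z r = if i = j then 1 else 0) :
    ∀ r : Fin n, (∃ i : Fin n, k ≤ (i : ℕ) ∧ J i r ≠ 0) → z r = 1 := by
  rintro r ⟨i, hik, hJir⟩
  have h1 : J * star J = 1 := Matrix.mem_unitaryGroup_iff.mp hJ
  have hrow : ∑ s, J i s * conj (J i s) = 1 := by
    have := congrFun (congrFun h1 i) i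
    simpa [Matrix.mul_apply, Matrix.conjTranspose_apply] using this
  have hsum : ∑ s, J i s * conj (J i s) * z s = 1 := by
    simpa using h i i hik
  have hzero : ∑ s, (J i s * conj (J i s) * (1 - z s)).re = 0 := by
    have : ∑ s, J i s * conj (J i s) * (1 - z s) = 0 := by
      simp only [mul_sub, mul_one, Finset.sum_sub_distrib, hrow, hsum, sub_self]
    calc ∑ s, (J i s * conj (J i s) * (1 - z s)).re
        = (∑ s, J i s * conj (J i s) * (1 - z s)).re := by
          rw [Complex.re_sum]
      _ = 0 := by rw [this]; simp
  have habs : ∀ s, J i s * conj (J i s) = ((‖J i s‖)^2 : ℝ) := by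
    intro s
    rw [Complex.mul_conj, Complex.normSq_eq_norm_sq]
  have hterm : ∀ s, (J i s * conj (J i s) * (1 - z s)).re
      = (‖J i s‖)^2 * (1 - (z s).re) := by
    intro s
    rw [habs s]
    simp [Complex.mul_re, ← Complex.ofReal_pow, Complex.sub_re]
  have hnonneg : ∀ s ∈ Finset.univ, 0 ≤ (J i s * conj (J i s) * (1 - z s)).re := by
    intro s _
    rw [hterm s]
    apply mul_nonneg (sq_nonneg _)
    have : (z s).re ≤ 1 := by
      calc (z s).re ≤ |(z s).re| := le_abs_self _
        _ ≤ ‖z s‖ := Complex.abs_re_le_norm _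
        _ = 1 := hz s
    linarith
  have heach := (Finset.sum_eq_zero_iff_of_nonneg hnonneg).mp hzero r (Finset.mem_univ r)
  rw [hterm r] at heach
  have habsne : (‖J i r‖)^2 ≠ 0 := by
    simpa using hJir
  have hre : (z r).re = 1 := by
    rcases mul_eq_zero.mp heach with h' | h'
    · exact absurd h' habsne
    · linarith
  have him : (z r).im = 0 := by
    have h2 : (z r).re ^ 2 + (z r).im ^ 2 = 1 := by
      have := hz r
      rw [Complex.sq_norm] at *
      have : Complex.normSq (z r) = 1 := by
        have h3 := hz r
        have : (‖z r‖)^2 = 1 := by rw [h3]; ring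
        rwa [Complex.sq_norm] at this
      simpa [Complex.normSq_apply, sq] using this
    nlinarith
  exact Complex.ext hre him
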